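/- A submonoid N of a free monoid A* is right unitary (for all u, v in A*, if u ∈ N and uv ∈ N then v ∈ N) if and only if N is generated by a prefix code, i.e., by a set of nonempty words none of which is a proper prefix of another. -/

import Mathlib

private lemma fm_eq_one_iff {A : Type*} (x : FreeMonoid A) :
    x = 1 ↔ FreeMonoid.toList x = [] := by
  constructor
  · rintro rfl; rfl
  · intro h; exact FreeMonoid.toList.injective h

/-- A submonoid `N` of a free monoid is right unitary iff it is generated by a
prefix code: a set of nonempty words none of which is a (proper) prefix of
another. -/
theorem stmt_7 {A : Type*} [Fintype A] (N : Submonoid (FreeMonoid A)) :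
    (∀ u v : FreeMonoid A, u ∈ N → u * v ∈ N → v ∈ N) ↔
      ∃ X : Set (FreeMonoid A),
        (∀ x ∈ X, x ≠ 1) ∧
        (∀ x ∈ X, ∀ y ∈ X, FreeMonoid.toList x <+: FreeMonoid.toList y → x = y) ∧
        N = Submonoid.closure X := by
  constructor
  · intro hN
    refine ⟨{x | x ∈ N ∧ x ≠ 1 ∧
        ∀ p q : FreeMonoid A, p * q = x → p ≠ 1 → q ≠ 1 → p ∉ N}, ?_, ?_, ?_⟩
    · rintro x ⟨-, hx, -⟩; exact hx
    · rintro x ⟨hxN, hx1, -⟩ y ⟨hyN, hy1, hy⟩ ⟨t, ht⟩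
      have hxy : x * FreeMonoid.ofList t = y := by
        apply FreeMonoid.toList.injective
        simpa using ht
      by_cases h0 : (FreeMonoid.ofList t : FreeMonoid A) = 1
      · rw [h0, mul_one] at hxy; exact hxy
      · exact absurd hxN (hy x (FreeMonoid.ofList t) hxy hx1 h0)
    · set X : Set (FreeMonoid A) := {x | x ∈ N ∧ x ≠ 1 ∧
        ∀ p q : FreeMonoid A, p * q = x → p ≠ 1 → q ≠ 1 → p ∉ N} with hXdef
      apply le_antisymm
      · have key : ∀ n (w : FreeMonoid A), (FreeMonoid.toList w).length ≤ n →
            w ∈ N → w ∈ Submonoid.closure X := by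
          intro n
          induction n with
          | zero =>
            intro w hw _
            have : w = 1 := (fm_eq_one_iff w).2 (List.length_eq_zero_iff.1 (Nat.le_zero.1 hw))
            rw [this]; exact one_mem _
          | succ n ih =>
            intro w hw hwN
            by_cases hw1 : w = 1
            · rw [hw1]; exact one_mem _
            by_cases hwX : w ∈ X
            · exact Submonoid.subset_closure hwX
            · simp only [hXdef, Set.mem_setOf_eq, not_and, not_forall] at hwX
              obtain ⟨p, q, hpq, hp1, hq1, hpN⟩ := by
                have := hwX hwN hw1
                push_neg at this
                exact this
              have hqN : q ∈ N := hN p q hpN (hpq ▸ hwN)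
              have hlen : (FreeMonoid.toList p).length + (FreeMonoid.toList q).length
                  = (FreeMonoid.toList w).length := by
                rw [← hpq]; simp
              have hp0 : 0 < (FreeMonoid.toList p).length :=
                List.length_pos_iff.2 (fun h => hp1 ((fm_eq_one_iff p).2 h))
              have hq0 : 0 < (FreeMonoid.toList q).length :=
                List.length_pos_iff.2 (fun h => hq1 ((fm_eq_one_iff q).2 h))
              have hpc : p ∈ Submonoid.closure X := ih p (by omega) hpN
              have hqc : q ∈ Submonoid.closure X := ih q (by omega) hqN
              exact hpq ▸ mul_mem hpc hqc
        intro w hw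
        exact key _ w le_rfl hw
      · exact Submonoid.closure_le.2 (fun x hx => hx.1)
  · rintro ⟨X, hX1, hXpref, rfl⟩ u v hu huv
    have key : ∀ (l m : List (FreeMonoid A)) (v : FreeMonoid A),
        (∀ x ∈ l, x ∈ X) → (∀ y ∈ m, y ∈ X) → l.prod * v = m.prod →
        v ∈ Submonoid.closure X := by
      intro l
      induction l with
      | nil =>
        intro m v _ hm h
        rw [List.prod_nil, one_mul] at h
        rw [h]
        exact list_prod_mem (fun y hy => Submonoid.subset_closure (hm y hy))
      | cons x l ih =>
        intro m v hl hm h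
        cases m with
        | nil =>
          exfalso
          rw [List.prod_cons, List.prod_nil, mul_assoc] at h
          have : FreeMonoid.toList x = [] := by
            have := congrArg FreeMonoid.toList h
            simp only [FreeMonoid.toList_mul, FreeMonoid.toList_one] at this
            exact List.append_eq_nil_iff.1 this |>.1
          exact hX1 x (hl x (List.mem_cons_self)) ((fm_eq_one_iff x).2 this)
        | cons y m' =>
          rw [List.prod_cons, List.prod_cons, mul_assoc] at h
          have hfull := congrArg FreeMonoid.toList h
          simp only [FreeMonoid.toList_mul] at hfull
          have hxpre : FreeMonoid.toList x <+: (FreeMonoid.toList y ++ FreeMonoid.toList m'.prod) := by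
            rw [← hfull]; exact ⟨_, rfl⟩
          have hypre : FreeMonoid.toList y <+: (FreeMonoid.toList y ++ FreeMonoid.toList m'.prod) :=
            ⟨_, rfl⟩
          have hxy : x = y := by
            rcases List.prefix_or_prefix_of_prefix hxpre hypre with hc | hc
            · exact hXpref x (hl x (List.mem_cons_self)) y
                (hm y (List.mem_cons_self)) hc
            · exact (hXpref y (hm y (List.mem_cons_self)) x
                (hl x (List.mem_cons_self)) hc).symm
          subst hxy
          have hcancel : l.prod * v = m'.prod := mul_left_cancel h
          exact ih m' v (fun z hz => hl z (List.mem_cons_of_mem x hz))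
            (fun z hz => hm z (List.mem_cons_of_mem x hz)) hcancel
    obtain ⟨l, hl, hlp⟩ := Submonoid.exists_list_of_mem_closure hu
    obtain ⟨m, hm, hmp⟩ := Submonoid.exists_list_of_mem_closure huv
    exact key l m v hl hm (by rw [hlp, hmp])
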